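/- Sparse TLS reformulation: for fixed X ∈ ℝ^{m×n}, y ∈ ℝ^m, β₀ ∈ ℝⁿ, λ > 0, and any fixed β ∈ ℝⁿ, the infimum of ‖Δy‖₂² + ‖ΔX‖_F² over all (ΔX, Δy) satisfying y + Δy = (X + ΔX)(β₀ + β) equals ‖X(β₀+β) - y‖₂² / (1 + ‖β₀+β‖₂²). Consequently, β̂ minimizes the constrained TLS objective ‖Δy‖₂² + ‖ΔX‖_F² + λ‖β‖₁ subject to the constraint if and only if β̂ minimizes the unconstrained function β ↦ ‖X(β₀+β) - y‖₂²/(1 + ‖β₀+β‖₂²) + λ‖β‖₁. -/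

import Mathlib

lemma row_cs {n : ℕ} (a : ℝ) (u v : Fin n → ℝ) :
    (a - ∑ j, u j * v j) ^ 2 ≤ (a ^ 2 + ∑ j, u j ^ 2) * (1 + ∑ j, v j ^ 2) := by
  have h := Finset.sum_mul_sq_le_sq_mul_sq Finset.univ
    (fun o : Option (Fin n) => o.elim a u) (fun o : Option (Fin n) => o.elim 1 (fun j => -v j))
  simpa [Fintype.sum_option, mul_comm, Finset.mul_sum, sub_eq_add_neg, Finset.sum_neg_distrib,
    mul_neg] using h

lemma tls_lb {m n : ℕ} (X : Matrix (Fin m) (Fin n) ℝ) (y : Fin m → ℝ) (b : Fin n → ℝ)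
    (ΔX : Matrix (Fin m) (Fin n) ℝ) (Δy : Fin m → ℝ)
    (h : y + Δy = (X + ΔX).mulVec b) :
    (∑ i, (X.mulVec b - y) i ^ 2) / (1 + ∑ j, b j ^ 2) ≤
      (∑ i, Δy i ^ 2) + ∑ i, ∑ j, ΔX i j ^ 2 := by
  have hs : (0:ℝ) < 1 + ∑ j, b j ^ 2 := by positivity
  rw [div_le_iff₀ hs]
  have hr : ∀ i, (X.mulVec b - y) i = Δy i - ∑ j, ΔX i j * b j := by
    intro i
    have := congrFun h i
    simp [Matrix.mulVec, dotProduct, Matrix.add_apply, add_mul, Finset.sum_add_distrib]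
      at this ⊢
    linarith
  calc (∑ i, (X.mulVec b - y) i ^ 2)
      = ∑ i, (Δy i - ∑ j, ΔX i j * b j) ^ 2 := by simp [hr]
    _ ≤ ∑ i, (Δy i ^ 2 + ∑ j, ΔX i j ^ 2) * (1 + ∑ j, b j ^ 2) := by
        exact Finset.sum_le_sum fun i _ => row_cs (Δy i) (ΔX i) b
    _ = ((∑ i, Δy i ^ 2) + ∑ i, ∑ j, ΔX i j ^ 2) * (1 + ∑ j, b j ^ 2) := by
        rw [← Finset.sum_mul, Finset.sum_add_distrib]

lemma tls_achieve {m n : ℕ} (X : Matrix (Fin m) (Fin n) ℝ) (y : Fin m → ℝ) (b : Fin n → ℝ) :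
    ∃ (ΔX : Matrix (Fin m) (Fin n) ℝ) (Δy : Fin m → ℝ),
      y + Δy = (X + ΔX).mulVec b ∧
      (∑ i, Δy i ^ 2) + (∑ i, ∑ j, ΔX i j ^ 2) =
        (∑ i, (X.mulVec b - y) i ^ 2) / (1 + ∑ j, b j ^ 2) := by
  set s : ℝ := 1 + ∑ j, b j ^ 2 with hs_def
  have hs : (0:ℝ) < s := by positivity
  set r : Fin m → ℝ := X.mulVec b - y with hr
  clear_value s r
  refine ⟨fun i j => -(r i * b j) / s, fun i => r i / s, ?_, ?_⟩
  · funext i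
    have hb : ∑ j, b j * b j = s - 1 := by
      simp [hs_def, pow_two]
    simp only [Pi.add_apply, Matrix.mulVec, dotProduct, Matrix.add_apply]
    have : ∑ j, (X i j + -(r i * b j) / s) * b j
        = (∑ j, X i j * b j) - (r i / s) * (s - 1) := by
      rw [← hb]
      rw [Finset.mul_sum]
      rw [← Finset.sum_sub_distrib]
      congr 1; funext j; ring
    change y i + r i / s = ∑ j, (X i j + -(r i * b j) / s) * b j
    rw [this]
    have hri : r i = (∑ j, X i j * b j) - y i := by
      simp [hr, Matrix.mulVec, dotProduct]
    rw [hri]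
    field_simp
    ring
  · have h1 : ∀ i, (r i / s) ^ 2 + ∑ j, (-(r i * b j) / s) ^ 2 = r i ^ 2 / s := by
      intro i
      have : ∑ j, (-(r i * b j) / s) ^ 2 = r i ^ 2 * (s - 1) / s ^ 2 := by
        rw [Finset.sum_congr rfl (fun j _ => by ring :
          ∀ j ∈ Finset.univ, (-(r i * b j) / s) ^ 2 = r i ^ 2 / s ^ 2 * b j ^ 2)]
        rw [← Finset.mul_sum]
        have : ∑ j, b j ^ 2 = s - 1 := by simp [hs_def]
        rw [this]; ring
      rw [this]
      field_simp
      ring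
    calc (∑ i, (r i / s) ^ 2) + (∑ i, ∑ j, (-(r i * b j) / s) ^ 2)
        = ∑ i, ((r i / s) ^ 2 + ∑ j, (-(r i * b j) / s) ^ 2) := by
          rw [Finset.sum_add_distrib]
      _ = ∑ i, r i ^ 2 / s := by exact Finset.sum_congr rfl fun i _ => h1 i
      _ = (∑ i, r i ^ 2) / s := by rw [Finset.sum_div]


/-- Sparse TLS reformulation.  For each fixed `β`, the infimum of
`‖Δy‖₂² + ‖ΔX‖_F²` over the feasible set `{(ΔX, Δy) : y + Δy = (X + ΔX)(β₀ + β)}`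
equals `‖X(β₀+β) - y‖₂² / (1 + ‖β₀+β‖₂²)`.  Consequently `β̂` minimizes the
constrained TLS objective `‖Δy‖₂² + ‖ΔX‖_F² + λ‖β‖₁` over all feasible
`(β, ΔX, Δy)` iff `β̂` minimizes
`β ↦ ‖X(β₀+β) - y‖₂²/(1 + ‖β₀+β‖₂²) + λ‖β‖₁`. -/
theorem sparse_tls_reformulation (m n : ℕ) (X : Matrix (Fin m) (Fin n) ℝ)
    (y : Fin m → ℝ) (β₀ : Fin n → ℝ) (lam : ℝ) (hlam : 0 < lam) :
    (∀ β : Fin n → ℝ,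
      IsGLB
        {r : ℝ | ∃ (ΔX : Matrix (Fin m) (Fin n) ℝ) (Δy : Fin m → ℝ),
          y + Δy = (X + ΔX).mulVec (β₀ + β) ∧
          r = (∑ i, Δy i ^ 2) + ∑ i, ∑ j, ΔX i j ^ 2}
        ((∑ i, (X.mulVec (β₀ + β) - y) i ^ 2) / (1 + ∑ i, (β₀ + β) i ^ 2))) ∧
    (∀ βh : Fin n → ℝ,
      ((∃ (ΔXh : Matrix (Fin m) (Fin n) ℝ) (Δyh : Fin m → ℝ),
          y + Δyh = (X + ΔXh).mulVec (β₀ + βh) ∧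
          ∀ (β : Fin n → ℝ) (ΔX : Matrix (Fin m) (Fin n) ℝ) (Δy : Fin m → ℝ),
            y + Δy = (X + ΔX).mulVec (β₀ + β) →
            (∑ i, Δyh i ^ 2) + (∑ i, ∑ j, ΔXh i j ^ 2) + lam * ∑ i, |βh i| ≤
              (∑ i, Δy i ^ 2) + (∑ i, ∑ j, ΔX i j ^ 2) + lam * ∑ i, |β i|) ↔
        (∀ β : Fin n → ℝ,
          (∑ i, (X.mulVec (β₀ + βh) - y) i ^ 2) / (1 + ∑ i, (β₀ + βh) i ^ 2) +
              lam * ∑ i, |βh i| ≤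
            (∑ i, (X.mulVec (β₀ + β) - y) i ^ 2) / (1 + ∑ i, (β₀ + β) i ^ 2) +
              lam * ∑ i, |β i|))) := by
  have glb : ∀ β : Fin n → ℝ,
      IsLeast
        {r : ℝ | ∃ (ΔX : Matrix (Fin m) (Fin n) ℝ) (Δy : Fin m → ℝ),
          y + Δy = (X + ΔX).mulVec (β₀ + β) ∧
          r = (∑ i, Δy i ^ 2) + ∑ i, ∑ j, ΔX i j ^ 2}
        ((∑ i, (X.mulVec (β₀ + β) - y) i ^ 2) / (1 + ∑ i, (β₀ + β) i ^ 2)) := by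
    intro β
    constructor
    · obtain ⟨ΔX, Δy, hc, he⟩ := tls_achieve X y (β₀ + β)
      exact ⟨ΔX, Δy, hc, he.symm⟩
    · rintro r ⟨ΔX, Δy, hc, rfl⟩
      exact tls_lb X y (β₀ + β) ΔX Δy hc
  refine ⟨fun β => (glb β).isGLB, fun βh => ⟨?_, ?_⟩⟩
  · rintro ⟨ΔXh, Δyh, hfeas, hmin⟩ β
    obtain ⟨ΔX, Δy, hc, he⟩ := tls_achieve X y (β₀ + β)
    have h1 := tls_lb X y (β₀ + βh) ΔXh Δyh hfeas
    have h2 := hmin β ΔX Δy hc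
    rw [he] at h2
    linarith
  · intro hopt
    obtain ⟨ΔXh, Δyh, hc, he⟩ := tls_achieve X y (β₀ + βh)
    refine ⟨ΔXh, Δyh, hc, fun β ΔX Δy hfeas => ?_⟩
    have h1 := tls_lb X y (β₀ + β) ΔX Δy hfeas
    have h2 := hopt β
    rw [he]
    linarith
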